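/- arXiv:1303.5876 — 10 statements merged into one kernel-verified Lean document; each statement's English description precedes it below -/
import Mathlib

section
/- For every α ∈ (0, π) with α ≠ π/2 there is exactly one time t > 0 at which the projectile trajectory (x(t), y(t)) = (v₀ cos α · t, v₀ sin α · t − (g/2)t²) meets the safety parabola, i.e. y(t) = −(g/(2v₀²))x(t)² + v₀²/(2g); moreover at that point the x-coordinate satisfies tan α = v₀²/(g·x(t)). -/
open Real

/-- For every launch angle `α ∈ (0, π)` with `α ≠ π/2`, there is exactly one time `t > 0` at
which the projectile trajectory `x t = v₀ cos α · t`, `y t = v₀ sin α · t − (g/2)t²` meets the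
safety parabola `y = −(g/(2v₀²)) x² + v₀²/(2g)`; moreover at that point the x-coordinate
satisfies `tan α = v₀² / (g · x t)`. -/
theorem projectile_touches_safety_parabola_once (v₀ g α : ℝ) (hv₀ : 0 < v₀) (hg : 0 < g)
    (hα : α ∈ Set.Ioo 0 π) (hα' : α ≠ π / 2)
    (x y : ℝ → ℝ)
    (hx : ∀ t, x t = v₀ * Real.cos α * t)
    (hy : ∀ t, y t = v₀ * Real.sin α * t - g / 2 * t ^ 2) :
    (∃! t : ℝ, 0 < t ∧
        y t = -(g / (2 * v₀ ^ 2)) * (x t) ^ 2 + v₀ ^ 2 / (2 * g)) ∧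
    (∀ t : ℝ, 0 < t →
        y t = -(g / (2 * v₀ ^ 2)) * (x t) ^ 2 + v₀ ^ 2 / (2 * g) →
        Real.tan α = v₀ ^ 2 / (g * x t)) := by
  have hs : 0 < Real.sin α := Real.sin_pos_of_pos_of_lt_pi hα.1 hα.2
  have hc : Real.cos α ≠ 0 := by
    intro h
    rcases Real.cos_eq_zero_iff.mp h with ⟨k, hk⟩
    have hπ := Real.pi_pos
    have h1 : (0:ℝ) < 2 * k + 1 := by
      by_contra h1
      push_neg at h1
      nlinarith [hα.1, hk]
    have h2 : (2 * (k:ℝ) + 1) < 2 := by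
      by_contra h2
      push_neg at h2
      nlinarith [hα.2, hk]
    have hk1 : (0:ℤ) ≤ k := by
      have : (-1:ℝ) < 2 * k := by linarith
      have : (-1:ℤ) < 2 * k := by exact_mod_cast this
      omega
    have hk2 : (k:ℤ) ≤ 0 := by
      have : 2 * (k:ℝ) < 1 := by linarith
      have : 2 * (k:ℤ) < 1 := by exact_mod_cast this
      omega
    have : k = 0 := le_antisymm hk2 hk1
    subst this
    simp at hk
    exact hα' (by linarith [hk])
  have key : ∀ t : ℝ, (y t = -(g / (2 * v₀ ^ 2)) * (x t) ^ 2 + v₀ ^ 2 / (2 * g)) ↔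
      Real.sin α * t = v₀ / g := by
    intro t
    rw [hx, hy]
    have hpy : Real.sin α ^ 2 + Real.cos α ^ 2 = 1 := Real.sin_sq_add_cos_sq α
    constructor
    · intro h
      field_simp at h
      have h'' : (Real.sin α * t * g * (2 * v₀) - v₀ * (2 * v₀)) ^ 2 = 0 := by
        linear_combination (-4 * v₀ ^ 2) * h + (4 * g ^ 2 * v₀ ^ 2 * t ^ 2) * hpy
      have h3 := pow_eq_zero_iff (n := 2) (by norm_num) |>.mp h''
      rw [eq_div_iff hg.ne']
      have h2v : (2 : ℝ) * v₀ ≠ 0 := by positivity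
      have h4 : (2 * v₀) * (Real.sin α * t * g) = (2 * v₀) * v₀ := by linarith
      exact mul_left_cancel₀ h2v h4
    · intro h
      have h₂ : Real.sin α * t * g = v₀ := (eq_div_iff hg.ne').mp h
      field_simp
      linear_combination (-(Real.sin α * t * g - v₀)) * h₂ +
        (g ^ 2 * t ^ 2) * hpy
  have t₀pos : 0 < v₀ / (g * Real.sin α) := by positivity
  constructor
  · refine ⟨v₀ / (g * Real.sin α), ⟨t₀pos, ?_⟩, ?_⟩
    · rw [key]
      field_simp
    · rintro t ⟨ht, heq⟩
      have h₂ : Real.sin α * t * g = v₀ := (eq_div_iff hg.ne').mp ((key t).mp heq)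
      field_simp
      linear_combination h₂
  · intro t ht heq
    have h₂ : Real.sin α * t * g = v₀ := (eq_div_iff hg.ne').mp ((key t).mp heq)
    rw [hx, Real.tan_eq_sin_div_cos]
    have htne : t ≠ 0 := ne_of_gt ht
    field_simp
    linear_combination h₂
end

section
/- For every angle α with cos α ≠ 0, every point P = (x(t), y(t)) of the projectile trajectory (x(t), y(t)) = (v₀ cos α · t, v₀ sin α · t − (g/2)t²) is equidistant from the point F_α = ((v₀²/(2g)) sin 2α, −(v₀²/(2g)) cos 2α) and from the horizontal line y = v₀²/(2g); moreover the distance of F_α from the origin equals v₀²/(2g), so as α varies the foci F_α all lie on the circle of radius v₀²/(2g) centered at the origin. -/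
open Real

/-- For every angle `α` with `cos α ≠ 0`, every point `P = (x t, y t)` of the projectile
trajectory `x t = v₀ cos α · t`, `y t = v₀ sin α · t − (g/2)t²` is equidistant from the point
`F_α = ((v₀²/(2g)) sin 2α, −(v₀²/(2g)) cos 2α)` and from the horizontal line `y = v₀²/(2g)`
(whose distance from `(x, y)` is `|y − v₀²/(2g)|`); moreover `F_α` lies at distance `v₀²/(2g)`
from the origin, so as `α` varies the foci lie on the circle of radius `v₀²/(2g)` centered at
the origin. -/
theorem projectile_focus_directrix (v₀ g α : ℝ) (hv₀ : 0 < v₀) (hg : 0 < g)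
    (hcos : Real.cos α ≠ 0)
    (fx fy : ℝ)
    (hfx : fx = v₀ ^ 2 / (2 * g) * Real.sin (2 * α))
    (hfy : fy = -(v₀ ^ 2 / (2 * g)) * Real.cos (2 * α)) :
    (∀ t : ℝ,
        Real.sqrt ((v₀ * Real.cos α * t - fx) ^ 2 +
            ((v₀ * Real.sin α * t - g / 2 * t ^ 2) - fy) ^ 2) =
          |(v₀ * Real.sin α * t - g / 2 * t ^ 2) - v₀ ^ 2 / (2 * g)|) ∧
    Real.sqrt (fx ^ 2 + fy ^ 2) = v₀ ^ 2 / (2 * g) := by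
  have hpy : Real.sin α ^ 2 + Real.cos α ^ 2 = 1 := Real.sin_sq_add_cos_sq α
  have hs2 : Real.sin (2 * α) = 2 * Real.sin α * Real.cos α := Real.sin_two_mul α
  have hc2 : Real.cos (2 * α) = Real.cos α ^ 2 - Real.sin α ^ 2 := by rw [Real.cos_two_mul]; nlinarith [hpy]
  have hgne : g ≠ 0 := hg.ne'
  constructor
  · intro t
    have key : (v₀ * Real.cos α * t - fx) ^ 2 +
        ((v₀ * Real.sin α * t - g / 2 * t ^ 2) - fy) ^ 2 =
        ((v₀ * Real.sin α * t - g / 2 * t ^ 2) - v₀ ^ 2 / (2 * g)) ^ 2 := by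
      subst hfx hfy
      rw [hs2, hc2]
      field_simp
      linear_combination (2*v₀^2*t^2*g^2 - 4*v₀^3*t*g*Real.sin α + v₀^4*(Real.sin α^2+Real.cos α^2+1)) * hpy
    rw [key, Real.sqrt_sq_eq_abs]
  · have key : fx ^ 2 + fy ^ 2 = (v₀ ^ 2 / (2 * g)) ^ 2 := by
      subst hfx hfy
      nlinarith [Real.sin_sq_add_cos_sq (2 * α)]
    rw [key, Real.sqrt_sq (by positivity)]
end

section
/- Let x₀ ≠ 0, v₀ > 0, ω > 0, p = v₀/ω. For every angle α and every t, the point (x(t), y(t)) = (x₀ cos(ωt) + p cos α sin(ωt), p sin α sin(ωt)) satisfies x(t)²/(x₀² + p²) + y(t)²/p² ≤ 1; that is, every orbit lies inside or on the ellipse of safety x²/(x₀² + p²) + y²/p² = 1. -/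
open Real

/-- A two-dimensional free harmonic oscillator with frequency `ω > 0`, initial position
`(x₀, 0)` (with `x₀ ≠ 0`), speed `v₀ > 0` and any launch angle `α`, moving along
`x t = x₀ cos (ωt) + p cos α sin (ωt)`, `y t = p sin α sin (ωt)` where `p = v₀/ω`, stays
inside or on the ellipse of safety `x²/(x₀² + p²) + y²/p² = 1`. -/
theorem oscillator_inside_safety_ellipse (x₀ v₀ ω p : ℝ) (hx₀ : x₀ ≠ 0) (hv₀ : 0 < v₀)
    (hω : 0 < ω) (hp : p = v₀ / ω) :
    ∀ α t : ℝ,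
      (x₀ * Real.cos (ω * t) + p * Real.cos α * Real.sin (ω * t)) ^ 2 / (x₀ ^ 2 + p ^ 2) +
        (p * Real.sin α * Real.sin (ω * t)) ^ 2 / p ^ 2 ≤ 1 := by
  intro α t
  have hp0 : 0 < p := hp ▸ div_pos hv₀ hω
  have hA : 0 < x₀ ^ 2 + p ^ 2 := by positivity
  have h1 := Real.sin_sq_add_cos_sq (ω * t)
  have h2 := Real.sin_sq_add_cos_sq α
  rw [div_add_div _ _ (ne_of_gt hA) (ne_of_gt (pow_pos hp0 2)), div_le_one (by positivity)]
  have key : (x₀ * Real.cos (ω * t) + p * Real.cos α * Real.sin (ω * t)) ^ 2 +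
      (x₀ ^ 2 + p ^ 2) * (Real.sin α * Real.sin (ω * t)) ^ 2 ≤ x₀ ^ 2 + p ^ 2 := by
    have heq : x₀ ^ 2 + p ^ 2 -
        ((x₀ * Real.cos (ω * t) + p * Real.cos α * Real.sin (ω * t)) ^ 2 +
          (x₀ ^ 2 + p ^ 2) * (Real.sin α * Real.sin (ω * t)) ^ 2) =
        (x₀ * Real.cos α * Real.sin (ω * t) - p * Real.cos (ω * t)) ^ 2 := by
      linear_combination -(x₀ ^ 2 + p ^ 2) * h1 -
        (x₀ ^ 2 + p ^ 2) * Real.sin (ω * t) ^ 2 * h2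
    nlinarith [sq_nonneg (x₀ * Real.cos α * Real.sin (ω * t) - p * Real.cos (ω * t)), heq]
  nlinarith [mul_le_mul_of_nonneg_left key (le_of_lt (pow_pos hp0 2))]
end

section
/- Let x₀ ≠ 0, v₀ > 0, ω > 0, p = v₀/ω. For every α ∈ (0, π) there exists a time t at which the orbit point (x(t), y(t)) = (x₀ cos(ωt) + p cos α sin(ωt), p sin α sin(ωt)) lies on the ellipse of safety, i.e. x(t)²/(x₀² + p²) + y(t)²/p² = 1. -/
open Real

/-- A two-dimensional free harmonic oscillator with frequency `ω > 0`, initial position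
`(x₀, 0)` (with `x₀ ≠ 0`), speed `v₀ > 0` and launch angle `α ∈ (0, π)`, moving along
`x t = x₀ cos (ωt) + p cos α sin (ωt)`, `y t = p sin α sin (ωt)` where `p = v₀/ω`, touches
the ellipse of safety `x²/(x₀² + p²) + y²/p² = 1` at some time `t`. -/
theorem oscillator_touches_safety_ellipse (x₀ v₀ ω p : ℝ) (hx₀ : x₀ ≠ 0) (hv₀ : 0 < v₀)
    (hω : 0 < ω) (hp : p = v₀ / ω) :
    ∀ α ∈ Set.Ioo 0 π, ∃ t : ℝ,
      (x₀ * Real.cos (ω * t) + p * Real.cos α * Real.sin (ω * t)) ^ 2 / (x₀ ^ 2 + p ^ 2) +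
        (p * Real.sin α * Real.sin (ω * t)) ^ 2 / p ^ 2 = 1 := by
  intro α hα
  have hpp : 0 < p := by rw [hp]; positivity
  have hωne : (ω : ℝ) ≠ 0 := ne_of_gt hω
  -- choose θ solving p * cos θ = x₀ * cos α * sin θ
  obtain ⟨θ, hkey⟩ : ∃ θ : ℝ, p * Real.cos θ = x₀ * Real.cos α * Real.sin θ := by
    by_cases hc : x₀ * Real.cos α = 0
    · exact ⟨π / 2, by simp [hc]⟩
    · refine ⟨Real.arctan (p / (x₀ * Real.cos α)), ?_⟩
      have hcos : Real.cos (Real.arctan (p / (x₀ * Real.cos α))) ≠ 0 :=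
        ne_of_gt (Real.cos_arctan_pos _)
      have := Real.tan_arctan (p / (x₀ * Real.cos α))
      rw [Real.tan_eq_sin_div_cos] at this
      have hca : Real.cos α ≠ 0 := fun h => hc (by simp [h])
      field_simp at this ⊢
      linarith [this]
  refine ⟨θ / ω, ?_⟩
  rw [mul_div_cancel₀ _ hωne]
  have hAB : Real.sin θ ^ 2 + Real.cos θ ^ 2 = 1 := Real.sin_sq_add_cos_sq θ
  have hsa : Real.sin α ^ 2 = 1 - Real.cos α ^ 2 := by
    have := Real.sin_sq_add_cos_sq α; linarith
  have h1 : (0:ℝ) < x₀ ^ 2 + p ^ 2 := by positivity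
  field_simp
  linear_combination (Real.sin θ) ^ 2 * (x₀ ^ 2 + p ^ 2) * hsa +
    (x₀ ^ 2 + p ^ 2) * hAB -
    (p * Real.cos θ - x₀ * Real.cos α * Real.sin θ) * hkey
end

section
/- Fix x₀ ≠ 0, p > 0 and a point (x, y) with y ≠ 0. The quadratic equation y²(p² + x₀²)·u² − 2xy p²·u + (x² − x₀²)p² + x₀² y² = 0 in the unknown u = cot α has exactly one real solution if and only if x²/(x₀² + p²) + y²/p² = 1, i.e. if and only if (x, y) lies on the ellipse of safety. -/
open Real

/-- A real quadratic with nonzero leading coefficient has exactly one root iff its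
discriminant vanishes. -/
theorem quad_existsUnique_iff_discrim_eq_zero {a b c : ℝ} (ha : a ≠ 0) :
    (∃! u : ℝ, a * (u * u) + b * u + c = 0) ↔ discrim a b c = 0 := by
  constructor
  · rintro ⟨u, hu, huniq⟩
    have hsq := (quadratic_eq_zero_iff_discrim_eq_sq ha u).mp hu
    by_contra hne
    have hs : 2 * a * u + b ≠ 0 := fun h0 => hne (by rw [hsq, h0]; ring)
    have hroot' : a * ((u - (2 * a * u + b) / a) * (u - (2 * a * u + b) / a)) +
        b * (u - (2 * a * u + b) / a) + c = 0 := by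
      rw [quadratic_eq_zero_iff_discrim_eq_sq ha, hsq]
      field_simp
      ring
    have heq := huniq _ hroot'
    have h0 : (2 * a * u + b) / a = 0 := by linarith
    exact hs ((div_eq_zero_iff.mp h0).resolve_right ha)
  · intro hd
    have h2a : (2 : ℝ) * a ≠ 0 := by simpa using ha
    refine ⟨-b / (2 * a), ?_, ?_⟩
    · show a * (-b / (2 * a) * (-b / (2 * a))) + b * (-b / (2 * a)) + c = 0
      rw [quadratic_eq_zero_iff_discrim_eq_sq ha, hd]
      field_simp
      ring
    · intro u hu
      have hsq := (quadratic_eq_zero_iff_discrim_eq_sq ha u).mp hu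
      rw [hd] at hsq
      have h0 : 2 * a * u + b = 0 := (pow_eq_zero_iff two_ne_zero).mp hsq.symm
      field_simp
      linarith

/-- Fix `x₀ ≠ 0`, `p > 0` and a point `(x, y)` with `y ≠ 0`.  The quadratic equation
`y²(p² + x₀²) u² − 2xy p² u + (x² − x₀²) p² + x₀² y² = 0` in the unknown `u = cot α` has
exactly one real solution if and only if `x²/(x₀² + p²) + y²/p² = 1`, i.e. iff `(x, y)` lies
on the ellipse of safety. -/
theorem safety_ellipse_unique_solution (x₀ p x y : ℝ) (hx₀ : x₀ ≠ 0) (hp : 0 < p)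
    (hy : y ≠ 0) :
    (∃! u : ℝ,
        y ^ 2 * (p ^ 2 + x₀ ^ 2) * u ^ 2 - 2 * x * y * p ^ 2 * u +
          (x ^ 2 - x₀ ^ 2) * p ^ 2 + x₀ ^ 2 * y ^ 2 = 0)
      ↔ x ^ 2 / (x₀ ^ 2 + p ^ 2) + y ^ 2 / p ^ 2 = 1 := by
  have ha : y ^ 2 * (p ^ 2 + x₀ ^ 2) ≠ 0 := by positivity
  have hxp : x₀ ^ 2 + p ^ 2 ≠ 0 := by positivity
  have hp2 : p ^ 2 ≠ 0 := by positivity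
  have key : (∃! u : ℝ,
      y ^ 2 * (p ^ 2 + x₀ ^ 2) * u ^ 2 - 2 * x * y * p ^ 2 * u +
        (x ^ 2 - x₀ ^ 2) * p ^ 2 + x₀ ^ 2 * y ^ 2 = 0) ↔
      (∃! u : ℝ, (y ^ 2 * (p ^ 2 + x₀ ^ 2)) * (u * u) + (-(2 * x * y * p ^ 2)) * u +
        ((x ^ 2 - x₀ ^ 2) * p ^ 2 + x₀ ^ 2 * y ^ 2) = 0) :=
    existsUnique_congr (fun u => by constructor <;> intro h <;> linear_combination h)
  rw [key, quad_existsUnique_iff_discrim_eq_zero ha]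
  simp only [discrim]
  constructor
  · intro h
    have hE : (-4 * y ^ 2 * x₀ ^ 2) *
        (x ^ 2 * p ^ 2 + y ^ 2 * (x₀ ^ 2 + p ^ 2) - (x₀ ^ 2 + p ^ 2) * p ^ 2) = 0 := by
      linear_combination h
    have hc : (-4 : ℝ) * y ^ 2 * x₀ ^ 2 ≠ 0 := by positivity
    have hE0 := (mul_eq_zero.mp hE).resolve_left hc
    field_simp
    linarith
  · intro h
    field_simp at h
    linear_combination (-4 * y ^ 2 * x₀ ^ 2) * h
end

section
/- Let x₀ > 0, v₀ > 0 and α with sin α ≠ 0, and let P_α(t) = (x₀ cos t + v₀ cos α sin t, v₀ sin α sin t). Suppose F ∈ ℝ² and a > 0 are such that for every t, dist(P_α(t), F) + dist(P_α(t), −F) = 2a (so F and −F are the foci of the elliptical orbit). Then dist(F, (−x₀, 0)) · dist(F, (x₀, 0)) = v₀²; that is, writing F = (x, y), the focus satisfies the Cassini oval equation ((x + x₀)² + y²)((x − x₀)² + y²) = v₀⁴. -/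
open Real

/-- A point of the Euclidean plane with coordinates `a`, `b`. -/
noncomputable def pt (a b : ℝ) : EuclideanSpace ℝ (Fin 2) := WithLp.toLp 2 ![a, b]

/-- A two-dimensional free harmonic oscillator with frequency `ω = 1`, initial position
`(x₀, 0)` (with `x₀ > 0`), speed `v₀ > 0` and launch angle `α` with `sin α ≠ 0` moves along
the elliptical orbit `P_α(t) = (x₀ cos t + v₀ cos α sin t, v₀ sin α sin t)`.  If `F` and `−F`
are the foci of this orbit, that is, `dist (P_α t) F + dist (P_α t) (−F) = 2a` for every `t`
and some `a > 0`, then the product of the distances from `F` to `(−x₀, 0)` and `(x₀, 0)` is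
`v₀²`; writing `F = (x, y)`, the focus satisfies the Cassini oval equation
`((x + x₀)² + y²)((x − x₀)² + y²) = v₀⁴`. -/
theorem oscillator_foci_on_cassini_oval (x₀ v₀ α : ℝ) (hx₀ : 0 < x₀) (hv₀ : 0 < v₀)
    (hsin : Real.sin α ≠ 0)
    (P : ℝ → EuclideanSpace ℝ (Fin 2))
    (hP : ∀ t, P t = pt (x₀ * Real.cos t + v₀ * Real.cos α * Real.sin t)
                       (v₀ * Real.sin α * Real.sin t))
    (F : EuclideanSpace ℝ (Fin 2)) (a : ℝ) (ha : 0 < a)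
    (hfoci : ∀ t, dist (P t) F + dist (P t) (-F) = 2 * a) :
    dist F (pt (-x₀) 0) * dist F (pt x₀ 0) = v₀ ^ 2 ∧
    ((F 0 + x₀) ^ 2 + (F 1) ^ 2) * ((F 0 - x₀) ^ 2 + (F 1) ^ 2) = v₀ ^ 4 := by
  set x := F 0 with hxdef
  set y := F 1 with hydef
  have hdF : ∀ p q : ℝ, dist (pt p q) F = Real.sqrt ((p - x)^2 + (q - y)^2) := by
    intro p q
    rw [EuclideanSpace.dist_eq]
    congr 1
    simp [pt, Fin.sum_univ_two, Real.dist_eq, sq_abs, hxdef, hydef]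
  have hdnF : ∀ p q : ℝ, dist (pt p q) (-F) = Real.sqrt ((p + x)^2 + (q + y)^2) := by
    intro p q
    rw [EuclideanSpace.dist_eq]
    congr 1
    simp [pt, Fin.sum_univ_two, Real.dist_eq, sq_abs, hxdef, hydef]
  -- key per-point relation
  have main : ∀ z₁ z₂ : ℝ, dist (pt z₁ z₂) F + dist (pt z₁ z₂) (-F) = 2*a →
      (z₁*x + z₂*y)^2 = a^2*(z₁^2 + z₂^2 + x^2 + y^2 - a^2) := by
    intro z₁ z₂ hs
    set d₁ := dist (pt z₁ z₂) F with hd₁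
    set d₂ := dist (pt z₁ z₂) (-F) with hd₂
    have h1 : d₁^2 = (z₁^2+z₂^2+x^2+y^2) - 2*(z₁*x+z₂*y) := by
      rw [hd₁, hdF, Real.sq_sqrt (by positivity)]; ring
    have h2 : d₂^2 = (z₁^2+z₂^2+x^2+y^2) + 2*(z₁*x+z₂*y) := by
      rw [hd₂, hdnF, Real.sq_sqrt (by positivity)]; ring
    have hs2 : (d₁+d₂)^2 = (2*a)^2 := by rw [hs]
    have hd : d₁*d₂ = 2*a^2 - (z₁^2+z₂^2+x^2+y^2) := by
      linear_combination (1/2)*hs2 - (1/2)*h1 - (1/2)*h2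
    linear_combination (d₂^2/4) * h1 + (((z₁^2+z₂^2+x^2+y^2) - 2*(z₁*x+z₂*y))/4) * h2
      - ((d₁*d₂+2*a^2-(z₁^2+z₂^2+x^2+y^2))/4) * hd
  have mainT : ∀ t : ℝ,
      ((x₀*Real.cos t + v₀*Real.cos α*Real.sin t)*x + (v₀*Real.sin α*Real.sin t)*y)^2
        = a^2*((x₀*Real.cos t + v₀*Real.cos α*Real.sin t)^2 + (v₀*Real.sin α*Real.sin t)^2
          + x^2 + y^2 - a^2) := by
    intro t
    apply main
    rw [← hP]; exact hfoci t
  set b₁ := v₀ * Real.cos α with hb₁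
  set b₂ := v₀ * Real.sin α with hb₂
  have hb₂ne : b₂ ≠ 0 := mul_ne_zero hv₀.ne' hsin
  have hW : b₁^2 + b₂^2 = v₀^2 := by
    rw [hb₁, hb₂]; linear_combination v₀^2 * (Real.sin_sq_add_cos_sq α)
  have m0 := mainT 0
  simp only [Real.cos_zero, Real.sin_zero, mul_zero, mul_one, add_zero, zero_mul] at m0
  have E1 : (x₀*x)^2 = a^2*(x₀^2 + x^2 + y^2 - a^2) := by linear_combination m0
  have m1 := mainT (Real.pi/2)
  simp only [Real.cos_pi_div_two, Real.sin_pi_div_two, mul_zero, mul_one, zero_add,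
    zero_mul] at m1
  have E2 : (b₁*x + b₂*y)^2 = a^2*(b₁^2 + b₂^2 + x^2 + y^2 - a^2) := by linear_combination m1
  have m2 := mainT (Real.pi/4)
  rw [Real.cos_pi_div_four, Real.sin_pi_div_four] at m2
  have hs2 : Real.sqrt 2 ^ 2 = 2 := Real.sq_sqrt (by norm_num)
  have E3 : (x₀*x) * (b₁*x + b₂*y) = a^2 * (x₀*b₁) := by
    linear_combination m2 - (1/2)*E1 - (1/2)*E2
      - (((x₀*x + (b₁*x+b₂*y))^2 - a^2*((x₀+b₁)^2+b₂^2))/4) * hs2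
  -- Gram/consistency relation
  have h4 : x₀^2*b₂^2*(x^2+y^2)
      = a^2*(((x^2+y^2) - a^2)*(x₀^2 + b₁^2 + b₂^2) + 2*x₀^2*b₂^2) := by
    linear_combination (b₁^2+b₂^2) * E1 + x₀^2 * E2 + (-2*x₀*b₁) * E3
  -- product relation
  have h5 : (x₀^2 + (x^2+y^2) - a^2)*(b₁^2+b₂^2 + (x^2+y^2) - a^2) = x₀^2*b₁^2 := by
    have ha4 : (a:ℝ)^4 ≠ 0 := by positivity
    apply mul_left_cancel₀ ha4
    linear_combination (-(b₁*x+b₂*y)^2) * E1 + (-(a^2*(x₀^2 + (x^2+y^2) - a^2))) * E2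
      + ((x₀*x)*(b₁*x+b₂*y) + a^2*(x₀*b₁)) * E3
  have hiii : (x^2+y^2 - a^2) * (x₀^2*b₂^2 + a^2*(x^2+y^2-a^2)) = 0 := by
    linear_combination h4 + a^2 * h5
  have hD : x₀^2*b₂^2 ≠ 0 := by positivity
  have hkey : x^2 + y^2 = 2*a^2 - x₀^2 - v₀^2 := by
    rcases mul_eq_zero.1 hiii with h | h
    · exfalso
      apply hD
      linear_combination h5 - (x^2+y^2-a^2 + x₀^2 + b₁^2+b₂^2) * h
    · have h7 : x₀^2*b₂^2 * ((x^2+y^2) - (2*a^2 - x₀^2 - (b₁^2+b₂^2))) = 0 := by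
        linear_combination ((x^2+y^2-a^2) + x₀^2 + (b₁^2+b₂^2)) * h + (-(a^2)) * h5
      have := (mul_eq_zero.1 h7).resolve_left hD
      linear_combination this - hW
  have cassini : ((x + x₀) ^ 2 + y ^ 2) * ((x - x₀) ^ 2 + y ^ 2) = v₀ ^ 4 := by
    linear_combination (-4)*E1 + (x^2+y^2 + x₀^2 - 2*a^2 - v₀^2)*hkey
  refine ⟨?_, cassini⟩
  have d1 : dist F (pt (-x₀) 0) = Real.sqrt ((x + x₀)^2 + y^2) := by
    rw [dist_comm, hdF]; ring_nf
  have d2 : dist F (pt x₀ 0) = Real.sqrt ((x - x₀)^2 + y^2) := by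
    rw [dist_comm, hdF]; ring_nf
  rw [d1, d2, ← Real.sqrt_mul (by positivity), cassini,
    show (v₀:ℝ)^4 = (v₀^2)^2 by ring, Real.sqrt_sq (by positivity)]
end

section
/- Let x₀ > 0, v₀ > 0 and α be arbitrary, and let P_α(t) = (x₀ cos t + v₀ cos α sin t, v₀ sin α sin t). Then the supremum over t of |P_α(t)|² plus the infimum over t of |P_α(t)|² equals x₀² + v₀²; i.e., the semi-axes a, b of the orbit satisfy a² + b² = x₀² + v₀². -/
open Real

private lemma key_greatest (D B : ℝ) :
    IsGreatest (Set.range (fun t => D * Real.cos t + B * Real.sin t))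
      (Real.sqrt (D ^ 2 + B ^ 2)) := by
  constructor
  · rcases eq_or_lt_of_le (by positivity : (0:ℝ) ≤ D ^ 2 + B ^ 2) with h | h
    · have hD : D = 0 := by nlinarith [sq_nonneg D, sq_nonneg B]
      have hB : B = 0 := by nlinarith [sq_nonneg D, sq_nonneg B]
      exact ⟨0, by simp [hD, hB, ← h]⟩
    · set R := Real.sqrt (D ^ 2 + B ^ 2) with hR
      have hRpos : 0 < R := Real.sqrt_pos.mpr h
      have hR2 : R ^ 2 = D ^ 2 + B ^ 2 := Real.sq_sqrt h.le
      set z : ℂ := ⟨D, B⟩ with hz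
      have hzne : z ≠ 0 := by
        intro hzz
        rw [Complex.ext_iff] at hzz
        simp [hz] at hzz
        nlinarith [hzz.1, hzz.2]
      have habs : ‖z‖ = R := by
        rw [Complex.norm_def, Complex.normSq_mk]
        rw [hR]; ring_nf
      have hc : Real.cos (Complex.arg z) = D / R := by
        rw [Complex.cos_arg hzne, habs]
      have hs : Real.sin (Complex.arg z) = B / R := by
        rw [Complex.sin_arg, habs]
      refine ⟨Complex.arg z, ?_⟩
      simp only [hc, hs]
      field_simp
      nlinarith [hR2]
  · rintro y ⟨t, rfl⟩
    show D * Real.cos t + B * Real.sin t ≤ _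
    have h1 := Real.sin_sq_add_cos_sq t
    have h2 : 0 ≤ Real.sqrt (D ^ 2 + B ^ 2) := Real.sqrt_nonneg _
    have h3 : (Real.sqrt (D ^ 2 + B ^ 2)) ^ 2 = D ^ 2 + B ^ 2 :=
      Real.sq_sqrt (by positivity)
    nlinarith [sq_nonneg (D * Real.sin t - B * Real.cos t),
      sq_nonneg (D * Real.cos t + B * Real.sin t - Real.sqrt (D ^ 2 + B ^ 2))]

private lemma key_least (D B : ℝ) :
    IsLeast (Set.range (fun t => D * Real.cos t + B * Real.sin t))
      (-Real.sqrt (D ^ 2 + B ^ 2)) := by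
  have h := key_greatest (-D) (-B)
  constructor
  · obtain ⟨⟨t, ht⟩, _⟩ := h
    refine ⟨t, ?_⟩
    simp only at ht ⊢
    have : (-D) ^ 2 + (-B) ^ 2 = D ^ 2 + B ^ 2 := by ring
    rw [this] at ht
    linarith [ht]
  · rintro y ⟨t, rfl⟩
    have := h.2 ⟨t, rfl⟩
    show -Real.sqrt _ ≤ D * Real.cos t + B * Real.sin t
    simp only at this ⊢
    have h2 : (-D) ^ 2 + (-B) ^ 2 = D ^ 2 + B ^ 2 := by ring
    rw [h2] at this
    linarith

/-- A two-dimensional free harmonic oscillator with frequency `ω = 1`, initial position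
`(x₀, 0)` (with `x₀ > 0`), speed `v₀ > 0` and arbitrary launch angle `α` moves along the
elliptical orbit `P_α(t) = (x₀ cos t + v₀ cos α sin t, v₀ sin α sin t)`.  The supremum over
`t` of `|P_α(t)|²` plus the infimum over `t` of `|P_α(t)|²` equals `x₀² + v₀²`; i.e. the
semi-axes `a`, `b` of the orbit satisfy `a² + b² = x₀² + v₀²`. -/
theorem oscillator_sum_of_squared_semiaxes (x₀ v₀ α : ℝ) (hx₀ : 0 < x₀) (hv₀ : 0 < v₀) :
    (⨆ t : ℝ, ((x₀ * Real.cos t + v₀ * Real.cos α * Real.sin t) ^ 2 +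
        (v₀ * Real.sin α * Real.sin t) ^ 2)) +
      (⨅ t : ℝ, ((x₀ * Real.cos t + v₀ * Real.cos α * Real.sin t) ^ 2 +
        (v₀ * Real.sin α * Real.sin t) ^ 2)) = x₀ ^ 2 + v₀ ^ 2 := by
  set M : ℝ := (x₀ ^ 2 + v₀ ^ 2) / 2 with hM
  set D : ℝ := (x₀ ^ 2 - v₀ ^ 2) / 2 with hD
  set B : ℝ := x₀ * v₀ * Real.cos α with hB
  set R : ℝ := Real.sqrt (D ^ 2 + B ^ 2) with hRdef
  set f : ℝ → ℝ := fun t => (x₀ * Real.cos t + v₀ * Real.cos α * Real.sin t) ^ 2 +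
      (v₀ * Real.sin α * Real.sin t) ^ 2 with hf
  have hfeq : ∀ t, f t = M + (D * Real.cos (2 * t) + B * Real.sin (2 * t)) := by
    intro t
    have hc2 : Real.cos (2 * t) = Real.cos t ^ 2 - Real.sin t ^ 2 := by
      rw [Real.cos_two_mul]; nlinarith [Real.sin_sq_add_cos_sq t]
    have hs2 : Real.sin (2 * t) = 2 * Real.sin t * Real.cos t := Real.sin_two_mul t
    have hsa : Real.sin α ^ 2 = 1 - Real.cos α ^ 2 := by
      nlinarith [Real.sin_sq_add_cos_sq α]
    simp only [hf, hM, hD, hB, hc2, hs2]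
    have h1 := Real.sin_sq_add_cos_sq t
    linear_combination (v₀ ^ 2 * Real.sin t ^ 2) * Real.sin_sq_add_cos_sq α +
      ((x₀ ^ 2 + v₀ ^ 2) / 2) * h1
  have hgreat : IsGreatest (Set.range f) (M + R) := by
    have h := key_greatest D B
    constructor
    · obtain ⟨θ, hθ⟩ := h.1
      refine ⟨θ / 2, ?_⟩
      rw [hfeq]
      rw [mul_div_cancel₀ θ (two_ne_zero)]
      simp only at hθ
      rw [hθ, hRdef]
    · rintro y ⟨t, rfl⟩
      rw [hfeq]
      have := h.2 ⟨2 * t, rfl⟩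
      simp only at this
      linarith
  have hleast : IsLeast (Set.range f) (M - R) := by
    have h := key_least D B
    constructor
    · obtain ⟨θ, hθ⟩ := h.1
      refine ⟨θ / 2, ?_⟩
      rw [hfeq]
      rw [mul_div_cancel₀ θ (two_ne_zero)]
      simp only at hθ
      rw [hθ, hRdef]; ring
    · rintro y ⟨t, rfl⟩
      rw [hfeq]
      have := h.2 ⟨2 * t, rfl⟩
      simp only at this
      linarith
  have hsup : (⨆ t : ℝ, f t) = M + R := hgreat.csSup_eq
  have hinf : (⨅ t : ℝ, f t) = M - R := hleast.csInf_eq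
  calc (⨆ t : ℝ, f t) + (⨅ t : ℝ, f t) = (M + R) + (M - R) := by rw [hsup, hinf]
    _ = x₀ ^ 2 + v₀ ^ 2 := by rw [hM]; ring
end

section
/- Let x₀ > 0 and α with sin α ≠ 0, and let P_α(t) = (x₀ cos t + x₀ cos α sin t, x₀ sin α sin t) (the case v₀ = x₀). Suppose F ∈ ℝ² and a > 0 satisfy dist(P_α(t), F) + dist(P_α(t), −F) = 2a for every t. Then F = (x, y) lies on the lemniscate of Bernoulli (x² + y²)² = 2x₀²(x² − y²). -/
open Real

lemma focal_poly (p F : EuclideanSpace ℝ (Fin 2)) (a : ℝ)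
    (h : dist p F + dist p (-F) = 2 * a) :
    a^2 * ((p 0)^2 + (p 1)^2 + (F 0)^2 + (F 1)^2 - a^2)
      = ((p 0) * (F 0) + (p 1) * (F 1))^2 := by
  have hd2 : (dist p F)^2 = (p 0 - F 0)^2 + (p 1 - F 1)^2 := by
    rw [EuclideanSpace.dist_eq, Real.sq_sqrt (by positivity)]
    simp [Fin.sum_univ_two, Real.dist_eq, sq_abs]
  have he2 : (dist p (-F))^2 = (p 0 + F 0)^2 + (p 1 + F 1)^2 := by
    rw [EuclideanSpace.dist_eq, Real.sq_sqrt (by positivity)]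
    simp [Fin.sum_univ_two, Real.dist_eq, sq_abs]
  set d := dist p F with hdd
  set e := dist p (-F) with hee
  have he : e = 2*a - d := by linarith
  have key1 : d^2 - (2*a - d)^2 = -4*((p 0) * (F 0) + (p 1) * (F 1)) := by
    rw [← he, hd2, he2]; ring
  have had : a * d = a^2 - ((p 0) * (F 0) + (p 1) * (F 1)) := by
    linear_combination key1 / 4
  have hsq : (a*d)^2 = (a^2 - ((p 0) * (F 0) + (p 1) * (F 1)))^2 := by rw [had]
  linear_combination hsq - a^2 * hd2

set_option maxHeartbeats 1600000 in
/-- A two-dimensional free harmonic oscillator with frequency `ω = 1`, initial position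
`(x₀, 0)` (with `x₀ > 0`), initial speed `v₀ = x₀` and launch angle `α` with `sin α ≠ 0`
moves along the elliptical orbit `P_α(t) = (x₀ cos t + x₀ cos α sin t, x₀ sin α sin t)`.
If `F` and `−F` are the foci of this orbit, that is, `dist (P_α t) F + dist (P_α t) (−F) = 2a`
for every `t` and some `a > 0`, then `F = (x, y)` lies on the lemniscate of Bernoulli
`(x² + y²)² = 2x₀²(x² − y²)`. -/
theorem oscillator_foci_on_lemniscate (x₀ α : ℝ) (hx₀ : 0 < x₀) (hsin : Real.sin α ≠ 0)
    (P : ℝ → EuclideanSpace ℝ (Fin 2))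
    (hP : ∀ t, P t = pt (x₀ * Real.cos t + x₀ * Real.cos α * Real.sin t)
                       (x₀ * Real.sin α * Real.sin t))
    (F : EuclideanSpace ℝ (Fin 2)) (a : ℝ) (ha : 0 < a)
    (hfoci : ∀ t, dist (P t) F + dist (P t) (-F) = 2 * a) :
    ((F 0) ^ 2 + (F 1) ^ 2) ^ 2 = 2 * x₀ ^ 2 * ((F 0) ^ 2 - (F 1) ^ 2) := by
  have E0 := focal_poly (P 0) F a (hfoci 0)
  rw [hP 0] at E0
  simp only [pt, PiLp.toLp_apply, Matrix.cons_val_zero, Matrix.cons_val_one, Matrix.head_cons,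
    Real.cos_zero, Real.sin_zero] at E0
  have E1 := focal_poly (P (π/2)) F a (hfoci (π/2))
  rw [hP (π/2)] at E1
  simp only [pt, PiLp.toLp_apply, Matrix.cons_val_zero, Matrix.cons_val_one, Matrix.head_cons,
    Real.cos_pi_div_two, Real.sin_pi_div_two] at E1
  have E2 := focal_poly (P (π/4)) F a (hfoci (π/4))
  rw [hP (π/4)] at E2
  simp only [pt, PiLp.toLp_apply, Matrix.cons_val_zero, Matrix.cons_val_one, Matrix.head_cons,
    Real.cos_pi_div_four, Real.sin_pi_div_four] at E2
  have E3 := focal_poly (P (-(π/4))) F a (hfoci (-(π/4)))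
  rw [hP (-(π/4))] at E3
  simp only [pt, PiLp.toLp_apply, Matrix.cons_val_zero, Matrix.cons_val_one, Matrix.head_cons,
    Real.cos_neg, Real.sin_neg, Real.cos_pi_div_four, Real.sin_pi_div_four] at E3
  have h4 : Real.cos α ^ 2 + Real.sin α ^ 2 = 1 := by
    rw [add_comm]; exact Real.sin_sq_add_cos_sq α
  have hc : (Real.sqrt 2 / 2)^2 = 1/2 := by
    rw [div_pow, Real.sq_sqrt (by norm_num)]; norm_num
  set u := F 0
  set v := F 1
  set k := Real.cos α
  set s := Real.sin α
  -- derived clean equations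
  have hAB : u^2 = (k*u + s*v)^2 := by
    have h' : x₀^2 * u^2 = x₀^2 * (k*u + s*v)^2 := by
      linear_combination E1 - E0 - a^2*x₀^2*h4
    exact mul_left_cancel₀ (pow_ne_zero 2 hx₀.ne') h'
  have hprod : u * (k*u + s*v) = k * a^2 := by
    have h' : x₀^2 * (u * (k*u + s*v)) = x₀^2 * (k*a^2) := by
      linear_combination (E3 - E2)/2 + (2*x₀^2*k*a^2 - 2*x₀^2*(u*(k*u+s*v)))*hc
    exact mul_left_cancel₀ (pow_ne_zero 2 hx₀.ne') h'
  have hs2 : 0 < s^2 := by positivity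
  have hk1 : k < 1 := by nlinarith
  have hk1' : -1 < k := by nlinarith
  have hfac : (u - (k*u+s*v)) * (u + (k*u+s*v)) = 0 := by linear_combination hAB
  rcases mul_eq_zero.mp hfac with hcase | hcase
  · -- u = k*u + s*v
    have hB : k*u + s*v = u := by linarith [sub_eq_zero.mp hcase]
    have hU : u^2 = k*a^2 := by linear_combination hprod - u*hB
    have hsv : s*v = (1-k)*u := by linear_combination hB
    have h1k : (0:ℝ) < 1 + k := by linarith
    have h9 : (1-k)*(v^2*(1+k) - u^2*(1-k)) = 0 := by
      linear_combination (s*v + (1-k)*u)*hsv - v^2*h4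
    have h9' : v^2*(1+k) - u^2*(1-k) = 0 := by
      rcases mul_eq_zero.mp h9 with h | h
      · linarith
      · exact h
    have hVv : v^2 = k*a^2*(1-k)/(1+k) := by
      rw [eq_div_iff h1k.ne']
      linear_combination h9' + (1-k)*hU
    have hXv : x₀^2 = a^2/(1+k) := by
      rw [eq_div_iff h1k.ne']
      have h10 : (x₀^2*(1+k) - a^2) * (a^2*(1-k)) = 0 := by
        linear_combination (1+k)*E0 - a^2*h9' - (2*a^2 - x₀^2*(1+k))*hU
      rcases mul_eq_zero.mp h10 with h | h
      · linarith [sub_eq_zero.mp h]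
      · exact absurd h (mul_ne_zero (pow_ne_zero 2 ha.ne') (by linarith : (0:ℝ) < 1-k).ne')
    rw [hU, hVv, hXv]
    field_simp
    ring
  · -- u = -(k*u + s*v)
    have hB : k*u + s*v = -u := by linear_combination hcase
    have hU : u^2 = -(k*a^2) := by linear_combination u*hB - hprod
    have hsv : s*v = -(1+k)*u := by linear_combination hB
    have h1k : (0:ℝ) < 1 - k := by linarith
    have h9 : (1+k)*(v^2*(1-k) - u^2*(1+k)) = 0 := by
      linear_combination (s*v - (1+k)*u)*hsv - v^2*h4
    have h9' : v^2*(1-k) - u^2*(1+k) = 0 := by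
      rcases mul_eq_zero.mp h9 with h | h
      · linarith
      · exact h
    have hVv : v^2 = -(k*a^2)*(1+k)/(1-k) := by
      rw [eq_div_iff h1k.ne']
      linear_combination h9' + (1+k)*hU
    have hXv : x₀^2 = a^2/(1-k) := by
      rw [eq_div_iff h1k.ne']
      have h10 : (x₀^2*(1-k) - a^2) * (a^2*(1+k)) = 0 := by
        linear_combination (1-k)*E0 - a^2*h9' - (2*a^2 - x₀^2*(1-k))*hU
      rcases mul_eq_zero.mp h10 with h | h
      · linarith [sub_eq_zero.mp h]
      · exact absurd h (mul_ne_zero (pow_ne_zero 2 ha.ne') (by linarith : (0:ℝ) < 1+k).ne')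
    rw [hU, hVv, hXv]
    field_simp
    ring
end

section
/- Let x₀ > 0 and α ∈ (−π/2, π/2), and let P_α(t) = (x₀ cos t + x₀ cos α sin t, x₀ sin α sin t). Define F_α = (x₀ √(cos α (1 + cos α)), x₀ sin α √(cos α)/√(1 + cos α)). Then for every t, dist(P_α(t), F_α) + dist(P_α(t), −F_α) = 2x₀√(1 + cos α); that is, F_α and −F_α are the foci of the orbit and the sum of focal distances is twice the semi-major axis x₀√(1 + cos α). -/
set_option maxHeartbeats 1000000

open Real

lemma dist_pt (a b c d : ℝ) :
    dist (pt a b) (pt c d) = Real.sqrt ((a - c) ^ 2 + (b - d) ^ 2) := by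
  rw [EuclideanSpace.dist_eq]
  simp [pt, Fin.sum_univ_two, Real.dist_eq, sq_abs]

lemma neg_pt (a b : ℝ) : -(pt a b) = pt (-a) (-b) := by
  ext i
  fin_cases i <;> simp [pt]

lemma key_sq (u v ct st s x₀ : ℝ) (hv : v ^ 2 = 1 + u ^ 2)
    (ht : ct ^ 2 + st ^ 2 = 1) (hs : s ^ 2 = 1 - u ^ 4) (hv0 : v ≠ 0) :
    ((ct * x₀ + u ^ 2 * x₀ * st) - x₀ * (u * v)) ^ 2 +
      (x₀ * s * st - x₀ * s * u / v) ^ 2 = (x₀ * v - x₀ * u * (ct + st)) ^ 2 := by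
  field_simp
  linear_combination (x₀ ^ 2 * ((2 * u * v * (1 - u ^ 2)) * st -
      (1 - u ^ 2) * (1 + 2 * u ^ 2 + (v ^ 2 - 1 - u ^ 2)))) * hv +
    (x₀ ^ 2 * v ^ 2 * (1 - u ^ 2)) * ht + (x₀ ^ 2 * (v * st - u) ^ 2) * hs

/-- A two-dimensional free harmonic oscillator with frequency `ω = 1`, initial position
`(x₀, 0)` (with `x₀ > 0`), initial speed `v₀ = x₀` and launch angle `α ∈ (−π/2, π/2)` moves
along the elliptical orbit `P_α(t) = (x₀ cos t + x₀ cos α sin t, x₀ sin α sin t)`.  With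
`F_α = (x₀ √(cos α (1 + cos α)), x₀ sin α √(cos α)/√(1 + cos α))`, every orbit point satisfies
`dist (P_α t) F_α + dist (P_α t) (−F_α) = 2 x₀ √(1 + cos α)`; that is, `F_α` and `−F_α` are
the foci of the orbit and the sum of focal distances equals twice the semi-major axis
`x₀ √(1 + cos α)`. -/
theorem oscillator_focus_formula (x₀ α : ℝ) (hx₀ : 0 < x₀)
    (hα : α ∈ Set.Ioo (-(π / 2)) (π / 2))
    (P : ℝ → EuclideanSpace ℝ (Fin 2))
    (hP : ∀ t, P t = pt (x₀ * Real.cos t + x₀ * Real.cos α * Real.sin t)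
                       (x₀ * Real.sin α * Real.sin t))
    (F : EuclideanSpace ℝ (Fin 2))
    (hF : F = pt (x₀ * Real.sqrt (Real.cos α * (1 + Real.cos α)))
                 (x₀ * Real.sin α * Real.sqrt (Real.cos α) / Real.sqrt (1 + Real.cos α))) :
    ∀ t : ℝ, dist (P t) F + dist (P t) (-F) = 2 * x₀ * Real.sqrt (1 + Real.cos α) := by
  intro t
  have hc : 0 < Real.cos α := Real.cos_pos_of_mem_Ioo hα
  set u := Real.sqrt (Real.cos α) with hu_def
  set v := Real.sqrt (1 + Real.cos α) with hv_def
  have hu2 : u ^ 2 = Real.cos α := Real.sq_sqrt hc.le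
  have hv2 : v ^ 2 = 1 + Real.cos α := Real.sq_sqrt (by linarith)
  have hv0 : 0 < v := Real.sqrt_pos.mpr (by linarith)
  have hu0 : 0 ≤ u := Real.sqrt_nonneg _
  have hmul : Real.sqrt (Real.cos α * (1 + Real.cos α)) = u * v :=
    Real.sqrt_mul hc.le _
  have hvu : v ^ 2 = 1 + u ^ 2 := by rw [hv2, hu2]
  have hs : Real.sin α ^ 2 = 1 - u ^ 4 := by
    have := Real.sin_sq_add_cos_sq α
    nlinarith [hu2]
  have ht : Real.cos t ^ 2 + Real.sin t ^ 2 = 1 := Real.cos_sq_add_sin_sq t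
  have hc1 : Real.cos α ≤ 1 := Real.cos_le_one α
  -- nonnegativity of the two focal radii
  have hb : u * (Real.cos t + Real.sin t) ≤ v ∧ -v ≤ u * (Real.cos t + Real.sin t) := by
    constructor <;>
    nlinarith [sq_nonneg (Real.cos t - Real.sin t), sq_nonneg (Real.cos t + Real.sin t),
      sq_nonneg (v - u * (Real.cos t + Real.sin t)),
      sq_nonneg (v + u * (Real.cos t + Real.sin t)), hu2, hvu, ht, hv0, hu0,
      mul_nonneg hu0 hv0.le]
  have h1 : dist (P t) F = x₀ * v - x₀ * u * (Real.cos t + Real.sin t) := by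
    rw [hP, hF, hmul, dist_pt]
    have hkey := key_sq u v (Real.cos t) (Real.sin t) (Real.sin α) x₀ hvu ht hs hv0.ne'
    rw [show (x₀ * Real.cos t + x₀ * Real.cos α * Real.sin t - x₀ * (u * v)) ^ 2 +
        (x₀ * Real.sin α * Real.sin t - x₀ * Real.sin α * u / v) ^ 2 =
        (x₀ * v - x₀ * u * (Real.cos t + Real.sin t)) ^ 2 by
      rw [← hkey, ← hu2]; ring]
    exact Real.sqrt_sq (by nlinarith [hb.1, hx₀])
  have h2 : dist (P t) (-F) = x₀ * v + x₀ * u * (Real.cos t + Real.sin t) := by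
    rw [hP, hF, hmul, neg_pt, dist_pt]
    have hkey := key_sq (-u) v (Real.cos t) (Real.sin t) (Real.sin α) x₀
      (by rw [hvu]; ring) ht (by rw [hs]; ring) hv0.ne'
    rw [show (x₀ * Real.cos t + x₀ * Real.cos α * Real.sin t -
        -(x₀ * (u * v))) ^ 2 +
        (x₀ * Real.sin α * Real.sin t - -(x₀ * Real.sin α * u / v)) ^ 2 =
        (x₀ * v - x₀ * (-u) * (Real.cos t + Real.sin t)) ^ 2 by
      rw [← hkey, ← hu2]; ring]
    rw [Real.sqrt_sq (by nlinarith [hb.2, hx₀])]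
    ring
  rw [h1, h2]; ring
end

section
/- Let x₀ > 0 and α ∈ (−π/2, π/2), and let F_α = (x, y) with x = x₀ √(cos α (1 + cos α)) and y = x₀ sin α √(cos α)/√(1 + cos α). Then x² + y² = 2x₀² cos α and x² − y² = 2x₀² cos²α; consequently F_α lies on the lemniscate (x² + y²)² = 2x₀²(x² − y²), and in polar form F_α = (r cos θ, r sin θ) with r² = 2x₀² cos α and polar angle θ = α/2, i.e. F_α = (x₀√(2 cos α) cos(α/2), x₀√(2 cos α) sin(α/2)). -/
open Real

/-- Let `x₀ > 0` and `α ∈ (−π/2, π/2)`, and let `F_α = (x, y)` with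
`x = x₀ √(cos α (1 + cos α))` and `y = x₀ sin α √(cos α)/√(1 + cos α)` (the focus of the
elliptical orbit of the oscillator with `v₀ = x₀` lying in the right half-plane).  Then
`x² + y² = 2x₀² cos α` and `x² − y² = 2x₀² cos² α`; consequently `F_α` lies on the lemniscate
`(x² + y²)² = 2x₀²(x² − y²)`, and in polar form `r² = 2x₀² cos α` with polar angle `θ = α/2`,
i.e. `F_α = (x₀ √(2 cos α) cos (α/2), x₀ √(2 cos α) sin (α/2))`. -/
theorem oscillator_focus_on_lemniscate (x₀ α x y : ℝ) (hx₀ : 0 < x₀)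
    (hα : α ∈ Set.Ioo (-(π / 2)) (π / 2))
    (hx : x = x₀ * Real.sqrt (Real.cos α * (1 + Real.cos α)))
    (hy : y = x₀ * Real.sin α * Real.sqrt (Real.cos α) / Real.sqrt (1 + Real.cos α)) :
    x ^ 2 + y ^ 2 = 2 * x₀ ^ 2 * Real.cos α ∧
    x ^ 2 - y ^ 2 = 2 * x₀ ^ 2 * Real.cos α ^ 2 ∧
    (x ^ 2 + y ^ 2) ^ 2 = 2 * x₀ ^ 2 * (x ^ 2 - y ^ 2) ∧
    x = x₀ * Real.sqrt (2 * Real.cos α) * Real.cos (α / 2) ∧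
    y = x₀ * Real.sqrt (2 * Real.cos α) * Real.sin (α / 2) := by
  obtain ⟨h1, h2⟩ := hα
  have hc : 0 < Real.cos α := Real.cos_pos_of_mem_Ioo ⟨h1, h2⟩
  have h1c : (0:ℝ) < 1 + Real.cos α := by linarith
  have hsc : Real.sin α ^ 2 = 1 - Real.cos α ^ 2 := by
    have := Real.sin_sq_add_cos_sq α; linarith
  have hx2 : x ^ 2 = x₀ ^ 2 * (Real.cos α * (1 + Real.cos α)) := by
    rw [hx, mul_pow, Real.sq_sqrt (by positivity)]
  have hy2 : y ^ 2 = x₀ ^ 2 * Real.sin α ^ 2 * Real.cos α / (1 + Real.cos α) := by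
    rw [hy, div_pow, mul_pow, mul_pow, Real.sq_sqrt hc.le, Real.sq_sqrt h1c.le]
  have H1 : x ^ 2 + y ^ 2 = 2 * x₀ ^ 2 * Real.cos α := by
    rw [hx2, hy2]
    field_simp
    nlinarith [hsc]
  have H2 : x ^ 2 - y ^ 2 = 2 * x₀ ^ 2 * Real.cos α ^ 2 := by
    rw [hx2, hy2]
    field_simp
    nlinarith [hsc]
  refine ⟨H1, H2, by rw [H1, H2]; ring, ?_, ?_⟩
  · -- half-angle for cosine
    have hcos2 : Real.cos (α / 2) ^ 2 = (1 + Real.cos α) / 2 := by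
      have := Real.cos_sq (α / 2); rw [this]; rw [show 2 * (α/2) = α by ring]; ring
    have hcpos : 0 < Real.cos (α / 2) := by
      apply Real.cos_pos_of_mem_Ioo
      constructor <;> [linarith; linarith]
    have : Real.sqrt (2 * Real.cos α) * Real.cos (α / 2)
        = Real.sqrt (Real.cos α * (1 + Real.cos α)) := by
      rw [← Real.sqrt_sq hcpos.le, ← Real.sqrt_mul (by positivity), hcos2]
      ring_nf
    rw [hx, ← this]; ring
  · have hcos2 : Real.cos (α / 2) ^ 2 = (1 + Real.cos α) / 2 := by
      have := Real.cos_sq (α / 2); rw [this]; rw [show 2 * (α/2) = α by ring]; ring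
    have hcpos : 0 < Real.cos (α / 2) := by
      apply Real.cos_pos_of_mem_Ioo
      constructor <;> [linarith; linarith]
    have hsin : Real.sin α = 2 * Real.sin (α / 2) * Real.cos (α / 2) := by
      rw [← Real.sin_two_mul]; ring_nf
    have hs1c : Real.sqrt (1 + Real.cos α) = Real.sqrt 2 * Real.cos (α / 2) := by
      rw [← Real.sqrt_sq hcpos.le, ← Real.sqrt_mul (by positivity), hcos2]
      congr 1; ring
    have h2s : Real.sqrt 2 * Real.sqrt 2 = 2 := Real.mul_self_sqrt (by norm_num)
    rw [hy, hsin, hs1c, Real.sqrt_mul (by norm_num : (0:ℝ) ≤ 2)]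
    rw [div_eq_iff (by positivity)]
    linear_combination (-(x₀) * Real.sin (α/2) * Real.cos (α/2) * Real.sqrt (Real.cos α)) * h2s
end
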